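/- Let A be an invertible n × n real matrix whose columns c₁, ..., cₙ have maximal |det| in the following sense: for every vector v in a given set V ⊆ ℝⁿ containing all cᵢ, replacing any column of A by v does not increase |det|. Then for every v ∈ V, the solution x of Ax = -v satisfies |xᵢ| ≤ 1 for each i = 1, ..., n. -/

import Mathlib

/-- Let `A` be an invertible `n × n` real matrix whose columns lie in a
set `V`, such that replacing any column of `A` by any `v ∈ V` does not increase the
absolute determinant. Then for every `v ∈ V`, the solution `x` of `A x = -v` satisfies
`|xᵢ| ≤ 1` for every `i`. -/
theorem stmt6 (n : ℕ) (A : Matrix (Fin n) (Fin n) ℝ) (hA : A.det ≠ 0)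
    (V : Set (Fin n → ℝ)) (hcolV : ∀ i, (fun j => A j i) ∈ V)
    (hmax : ∀ v ∈ V, ∀ i, |(A.updateCol i v).det| ≤ |A.det|)
    (v : Fin n → ℝ) (hv : v ∈ V) (x : Fin n → ℝ) (hx : A.mulVec x = -v) :
    ∀ i, |x i| ≤ 1 := by
  intro i
  have hc : A.cramer (-v) = A.det • x := by
    rw [← hx, Matrix.cramer_eq_adjugate_mulVec, Matrix.mulVec_mulVec,
      Matrix.adjugate_mul, Matrix.smul_mulVec, Matrix.one_mulVec]
  have h1 : A.cramer (-v) i = A.det * x i := by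
    rw [hc]; rfl
  have h2 : A.cramer (-v) i = -(A.updateCol i v).det := by
    rw [Matrix.cramer_apply]
    have : A.updateCol i (-v) = A.updateCol i ((-1 : ℝ) • v) := by
      simp
    rw [this, Matrix.det_updateCol_smul]
    ring
  have h3 : |A.det| * |x i| ≤ |A.det| := by
    rw [← abs_mul, ← h1, h2, abs_neg]
    exact hmax v hv i
  have hd : 0 < |A.det| := abs_pos.mpr hA
  calc |x i| = |A.det| * |x i| / |A.det| := by field_simp
    _ ≤ |A.det| / |A.det| := by gcongr
    _ = 1 := div_self hd.ne'
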